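/- Let (η_m)_{m∈ℕ} be i.i.d. uniform ZMod 2 random variables, and define the block-construction process ξ : ℕ → ZMod 2 by ξ_n := Σ_{m∈D(n)} η_m, where D(n) ⊆ ℕ is the set of integers m such that, for every position k, the k-th ternary digit of m equals the k-th ternary digit d_k(n) of n whenever d_k(n) ∈ {0,1}, and lies in {0,1} whenever d_k(n) = 2 (so that ξ_{2·3^k + j} = ξ_j + ξ_{3^k + j} for all k ≥ 0 and 0 ≤ j < 3^k). Then for every k ≥ 0 and all a ≠ b in ℕ, the two k-blocks (ξ_n)_{a·3^k ≤ n < (a+1)·3^k} and (ξ_n)_{b·3^k ≤ n < (b+1)·3^k} are independent random vectors. -/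

import Mathlib

open MeasureTheory ProbabilityTheory
open scoped Classical

/-- The `k`-th ternary digit of `n`. -/
def tdigit (k n : ℕ) : ℕ := n / 3 ^ k % 3

/-- `m ∈ D(n)`: for every position `k`, the `k`-th ternary digit of `m` equals the
`k`-th ternary digit of `n` whenever the latter is `0` or `1`, and lies in `{0,1}`
whenever the latter is `2`. -/
def memD (n m : ℕ) : Prop :=
  ∀ k : ℕ, if tdigit k n = 2 then tdigit k m ≤ 1 else tdigit k m = tdigit k n

/-- the per-digit condition -/
def condD (x y : ℕ) : Prop := if x = 2 then y ≤ 1 else y = x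

lemma memD_def (n m : ℕ) : memD n m ↔ ∀ k, condD (tdigit k n) (tdigit k m) := Iff.rfl

lemma tdigit_lt (j n : ℕ) : tdigit j n < 3 := Nat.mod_lt _ (by norm_num)

lemma tdigit_add_high (i K n : ℕ) : tdigit (i + K) n = tdigit i (n / 3 ^ K) := by
  unfold tdigit
  rw [pow_add, mul_comm, ← Nat.div_div_eq_div_mul]

lemma le_of_tdigit_le {m n : ℕ} (h : ∀ j, tdigit j m ≤ tdigit j n) : m ≤ n := by
  induction m using Nat.strong_induction_on generalizing n with
  | _ m ih =>
    rcases Nat.eq_zero_or_pos m with hm | hm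
    · omega
    · have h3 : m / 3 ≤ n / 3 := by
        refine ih (m / 3) (Nat.div_lt_self hm (by norm_num)) ?_
        intro j
        have h1 : tdigit j (m / 3) = tdigit (j + 1) m := by
          rw [tdigit_add_high j 1 m]; norm_num
        have h2 : tdigit j (n / 3) = tdigit (j + 1) n := by
          rw [tdigit_add_high j 1 n]; norm_num
        rw [h1, h2]; exact h _
      have h0 : m % 3 ≤ n % 3 := by
        have := h 0
        simpa [tdigit] using this
      omega

lemma eq_of_tdigit_eq {m n : ℕ} (h : ∀ j, tdigit j m = tdigit j n) : m = n :=
  le_antisymm (le_of_tdigit_le fun j => (h j).le) (le_of_tdigit_le fun j => (h j).ge)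

lemma memD_le {n m : ℕ} (h : memD n m) : m ≤ n := by
  refine le_of_tdigit_le fun j => ?_
  have := h j
  split at this <;> omega

lemma tdigit_low {K t : ℕ} (A : ℕ) (ht : t < 3 ^ K) {j : ℕ} (hj : j < K) :
    tdigit j (A * 3 ^ K + t) = tdigit j t := by
  unfold tdigit
  have hK : 3 ^ K = 3 ^ (K - j - 1) * 3 * 3 ^ j := by
    rw [mul_assoc, ← pow_succ']
    rw [← pow_add]
    congr 1
    omega
  have h1 : A * 3 ^ K + t = t + A * 3 ^ (K - j - 1) * 3 * 3 ^ j := by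
    rw [hK]; ring
  rw [h1, Nat.add_mul_div_right _ _ (Nat.pow_pos (n := j) (by norm_num)),
    Nat.add_mul_mod_self_right]

lemma tdigit_high {K t : ℕ} (A : ℕ) (ht : t < 3 ^ K) (i : ℕ) :
    tdigit (i + K) (A * 3 ^ K + t) = tdigit i A := by
  rw [tdigit_add_high]
  congr 1
  rw [Nat.add_comm, Nat.add_mul_div_right _ _ (Nat.pow_pos (n := K) (by norm_num)),
    Nat.div_eq_of_lt ht, Nat.zero_add]

lemma sum_digits_lt (c : ℕ → ℕ) (hc : ∀ j, c j < 3) (K : ℕ) :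
    (∑ j ∈ Finset.range K, c j * 3 ^ j) < 3 ^ K := by
  induction K with
  | zero => simp
  | succ K ih =>
    rw [Finset.sum_range_succ, pow_succ]
    have := hc K
    have h0 : 0 < 3 ^ K := (Nat.pow_pos (by norm_num))
    nlinarith [ih]

lemma tdigit_sum (c : ℕ → ℕ) (hc : ∀ j, c j < 3) (K : ℕ) (i : ℕ) :
    tdigit i (∑ j ∈ Finset.range K, c j * 3 ^ j) = if i < K then c i else 0 := by
  induction K generalizing i with
  | zero =>
    simp [tdigit]
  | succ K ih =>
    have hsum : (∑ j ∈ Finset.range (K+1), c j * 3 ^ j)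
        = c K * 3 ^ K + ∑ j ∈ Finset.range K, c j * 3 ^ j := by
      rw [Finset.sum_range_succ]; ring
    rw [hsum]
    rcases Nat.lt_or_ge i K with hi | hi
    · rw [tdigit_low (c K) (sum_digits_lt c hc K) hi, ih]
      simp [hi, Nat.lt_succ_of_lt hi]
    · have hi2 : i = (i - K) + K := by omega
      rw [hi2, tdigit_high (c K) (sum_digits_lt c hc K)]
      rcases Nat.eq_or_lt_of_le hi with he | hl
      · have hik : i - K = 0 := by omega
        rw [hik]
        have h2 : tdigit 0 (c K) = c K := by
          simp [tdigit, Nat.mod_eq_of_lt (hc K)]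
        rw [h2]
        simp
      · have h0 : tdigit (i - K) (c K) = 0 := by
          unfold tdigit
          have : c K < 3 ^ (i - K) := lt_of_lt_of_le (hc K) (by
            calc (3:ℕ) = 3 ^ 1 := by norm_num
            _ ≤ 3 ^ (i - K) := Nat.pow_le_pow_right (by norm_num) (by omega))
          rw [Nat.div_eq_of_lt this]
        rw [h0]
        have hni : ¬ i < K + 1 := by omega
        rw [← hi2, if_neg hni]

lemma digit_sum_self {K n : ℕ} (hn : n < 3 ^ K) :
    (∑ j ∈ Finset.range K, tdigit j n * 3 ^ j) = n := by
  induction K generalizing n with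
  | zero => simp at hn ⊢; omega
  | succ K ih =>
    have hq : n / 3 ^ K < 3 := by
      rw [Nat.div_lt_iff_lt_mul (Nat.pow_pos (n := K) (by norm_num))]
      rw [pow_succ] at hn; linarith
    have hr : n % 3 ^ K < 3 ^ K := Nat.mod_lt _ (Nat.pow_pos (n := K) (by norm_num))
    have hn2 : n = (n / 3 ^ K) * 3 ^ K + n % 3 ^ K := by
      rw [mul_comm]; exact (Nat.div_add_mod n (3 ^ K)).symm
    have hdig : ∀ j < K, tdigit j n = tdigit j (n % 3 ^ K) := by
      intro j hj
      conv_lhs => rw [hn2]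
      exact tdigit_low _ hr hj
    have hK : tdigit K n = n / 3 ^ K := by
      conv_lhs => rw [hn2]
      have := tdigit_high (K := K) (t := n % 3 ^ K) (n / 3 ^ K) hr 0
      simp only [Nat.zero_add] at this
      rw [this]
      simp only [tdigit, pow_zero, Nat.div_one]
      exact Nat.mod_eq_of_lt hq
    rw [Finset.sum_range_succ, hK]
    have : (∑ j ∈ Finset.range K, tdigit j n * 3 ^ j)
        = ∑ j ∈ Finset.range K, tdigit j (n % 3 ^ K) * 3 ^ j := by
      refine Finset.sum_congr rfl fun j hj => ?_
      rw [hdig j (Finset.mem_range.mp hj)]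
    rw [this, ih hr]
    omega

lemma memD_char {K t : ℕ} (A : ℕ) (ht : t < 3 ^ K) (m : ℕ) :
    memD (A * 3 ^ K + t) m ↔
      ((∀ j < K, condD (tdigit j t) (tdigit j m)) ∧ memD A (m / 3 ^ K)) := by
  rw [memD_def, memD_def]
  constructor
  · intro h
    refine ⟨fun j hj => ?_, fun i => ?_⟩
    · have := h j
      rwa [tdigit_low A ht hj] at this
    · have := h (i + K)
      rwa [tdigit_high A ht i, tdigit_add_high i K m] at this
  · rintro ⟨hlow, hhigh⟩ j
    rcases Nat.lt_or_ge j K with hj | hj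
    · rw [tdigit_low A ht hj]; exact hlow j hj
    · have hj2 : j = (j - K) + K := by omega
      rw [hj2, tdigit_high A ht, tdigit_add_high]
      exact hhigh (j - K)

lemma mem_image_val {K : ℕ} {S : Finset (Fin K)} {j : Fin K} :
    (j : ℕ) ∈ S.image Fin.val ↔ j ∈ S := by
  simp [Finset.mem_image, Fin.val_inj]

/-- the number `< 3^K` whose ternary digits are `2` exactly on `S`. -/
def tau (K : ℕ) (S : Finset (Fin K)) : ℕ :=
  ∑ j ∈ Finset.range K, (if j ∈ S.image Fin.val then 2 else 0) * 3 ^ j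

lemma tau_lt (K : ℕ) (S : Finset (Fin K)) : tau K S < 3 ^ K :=
  sum_digits_lt _ (fun j => by split <;> norm_num) K

lemma tdigit_tau {K : ℕ} (S : Finset (Fin K)) (j : Fin K) :
    tdigit (j : ℕ) (tau K S) = if j ∈ S then 2 else 0 := by
  rw [tau, tdigit_sum _ (fun j => by split <;> norm_num) K]
  rw [if_pos j.isLt]
  simp [Finset.mem_image, Fin.val_inj]

/-- the number `< 3^K` whose ternary digits are `1` exactly on `U`. -/
def lowOf (K : ℕ) (U : Finset (Fin K)) : ℕ :=
  ∑ j ∈ Finset.range K, (if j ∈ U.image Fin.val then 1 else 0) * 3 ^ j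

lemma lowOf_lt (K : ℕ) (U : Finset (Fin K)) : lowOf K U < 3 ^ K :=
  sum_digits_lt _ (fun j => by split <;> norm_num) K

lemma tdigit_lowOf {K : ℕ} (U : Finset (Fin K)) (j : Fin K) :
    tdigit (j : ℕ) (lowOf K U) = if j ∈ U then 1 else 0 := by
  rw [lowOf, tdigit_sum _ (fun j => by split <;> norm_num) K]
  rw [if_pos j.isLt]
  simp [Finset.mem_image, Fin.val_inj]

lemma tdigit_lowOf_le {K : ℕ} (U : Finset (Fin K)) (j : ℕ) :
    tdigit j (lowOf K U) ≤ 1 := by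
  rcases Nat.lt_or_ge j K with hj | hj
  · have := tdigit_lowOf U ⟨j, hj⟩
    dsimp at this
    rw [this]
    split <;> norm_num
  · rw [lowOf, tdigit_sum _ (fun j => by split <;> norm_num) K,
      if_neg (by omega)]
    norm_num

lemma tdigit_eq_zero_of_lt {n j : ℕ} (h : n < 3 ^ j) : tdigit j n = 0 := by
  simp [tdigit, Nat.div_eq_of_lt h]

lemma exists_high_aux {a b j₀ : ℕ} (hne : tdigit j₀ a ≠ tdigit j₀ b)
    (hb2 : tdigit j₀ b ≠ 2) : ∃ h, memD a h ∧ ¬ memD b h := by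
  have ha3 := tdigit_lt j₀ a
  have hb3 := tdigit_lt j₀ b
  set c : ℕ → ℕ := fun j =>
    if j = j₀ then (if tdigit j₀ a = 2 then 1 - tdigit j₀ b else tdigit j₀ a)
    else (if tdigit j a = 1 then 1 else 0) with hc
  have hclt : ∀ j, c j < 3 := by
    intro j
    simp only [hc]
    split <;> split <;> omega
  have haL : a < 3 ^ (a + 1) := by
    calc a < 2 ^ a := Nat.lt_two_pow_self
    _ ≤ 3 ^ a := Nat.pow_le_pow_left (by norm_num) a
    _ ≤ 3 ^ (a + 1) := Nat.pow_le_pow_right (by norm_num) (by omega)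
  set L := max (j₀ + 1) (a + 1) with hL
  have hj0L : j₀ < L := lt_of_lt_of_le (Nat.lt_succ_self _) (le_max_left _ _)
  have haL2 : a < 3 ^ L :=
    lt_of_lt_of_le haL (Nat.pow_le_pow_right (by norm_num) (le_max_right _ _))
  refine ⟨∑ j ∈ Finset.range L, c j * 3 ^ j, ?_, ?_⟩
  · intro j
    rw [tdigit_sum c hclt L j]
    by_cases hj : j < L
    · rw [if_pos hj]
      rcases eq_or_ne j j₀ with rfl | hjj
      · simp only [hc, if_pos rfl]
        split_ifs <;> omega
      · simp only [hc, if_neg hjj]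
        have := tdigit_lt j a
        split_ifs <;> omega
    · rw [if_neg hj]
      have hz : tdigit j a = 0 := tdigit_eq_zero_of_lt
        (lt_of_lt_of_le haL2 (Nat.pow_le_pow_right (by norm_num) (by omega)))
      rw [hz]
      norm_num
  · intro hmem
    have hthis := hmem j₀
    rw [tdigit_sum c hclt L j₀, if_pos hj0L] at hthis
    simp only [hc, if_pos rfl] at hthis
    split_ifs at hthis <;> omega

lemma zmod2_add_self (z : ZMod 2) : z + z = 0 := by revert z; decide

lemma indep_of_shift
    {Ω : Type*} [MeasurableSpace Ω] (P : Measure Ω) [IsProbabilityMeasure P]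
    (η : ℕ → Ω → ZMod 2) (hηmeas : ∀ m, Measurable (η m))
    (hηindep : iIndepFun η P)
    (hηunif : ∀ (m : ℕ) (c : ZMod 2), P {ω | η m ω = c} = 1 / 2)
    {N : Type*} [Fintype N] (M : ℕ)
    (A B : (ℕ → ZMod 2) → N → ZMod 2)
    (hAloc : ∀ v w, (∀ m, m < M → v m = w m) → A v = A w)
    (hBloc : ∀ v w, (∀ m, m < M → v m = w m) → B v = B w)
    (hAadd : ∀ v w, A (v + w) = A v + A w)
    (hBadd : ∀ v w, B (v + w) = B v + B w)
    (htrans : ∀ v, ∃ v₀, A v₀ = A v ∧ B v₀ = 0) :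
    IndepFun (fun ω => A fun m => η m ω) (fun ω => B fun m => η m ω) P := by
  set pad : (Fin M → ZMod 2) → (ℕ → ZMod 2) :=
    fun u m => if h : m < M then u ⟨m, h⟩ else 0 with hpad
  set W : Ω → Fin M → ZMod 2 := fun ω i => η (i : ℕ) ω with hW
  set A' : (Fin M → ZMod 2) → N → ZMod 2 := fun u => A (pad u) with hA'
  set B' : (Fin M → ZMod 2) → N → ZMod 2 := fun u => B (pad u) with hB'
  have hpadadd : ∀ u u' : Fin M → ZMod 2, pad (u + u') = pad u + pad u' := by
    intro u u'
    funext m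
    simp only [hpad, Pi.add_apply]
    split <;> simp
  have hApadd : ∀ u u' : Fin M → ZMod 2, A' (u + u') = A' u + A' u' := by
    intro u u'
    show A (pad (u + u')) = A (pad u) + A (pad u')
    rw [hpadadd, hAadd]
  have hWA : ∀ ω, (A fun m => η m ω) = A' (W ω) := by
    intro ω
    refine hAloc _ _ fun m hm => ?_
    simp [hpad, hW, hm]
  have hWB : ∀ ω, (B fun m => η m ω) = B' (W ω) := by
    intro ω
    refine hBloc _ _ fun m hm => ?_
    simp [hpad, hW, hm]
  have hshift : ∀ u : Fin M → ZMod 2, ∃ u₀ : Fin M → ZMod 2,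
      (∀ w, A' (w + u₀) = A' w + A' u) ∧ (∀ w, B' (w + u₀) = B' w) := by
    intro u
    obtain ⟨v₀, hA0, hB0⟩ := htrans (pad u)
    set u₀ : Fin M → ZMod 2 := fun i => v₀ (i : ℕ) with hu₀
    have hagree : ∀ w : Fin M → ZMod 2, ∀ m, m < M → pad (w + u₀) m = (pad w + v₀) m := by
      intro w m hm
      simp [hpad, hu₀, hm]
    refine ⟨u₀, fun w => ?_, fun w => ?_⟩
    · show A (pad (w + u₀)) = A (pad w) + A (pad u)
      rw [hAloc _ _ (hagree w), hAadd, hA0]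
    · show B (pad (w + u₀)) = B (pad w)
      rw [hBloc _ _ (hagree w), hBadd, hB0, add_zero]
  have haddself : ∀ u : Fin M → ZMod 2, u + u = 0 := by
    intro u; funext i; exact zmod2_add_self (u i)
  have hNaddself : ∀ x : N → ZMod 2, x + x = 0 := by
    intro x; funext i; exact zmod2_add_self (x i)
  set fibAB : (N → ZMod 2) → (N → ZMod 2) → Finset (Fin M → ZMod 2) :=
    fun x y => Finset.univ.filter fun u => A' u = x ∧ B' u = y with hfibAB
  set fibA : (N → ZMod 2) → Finset (Fin M → ZMod 2) :=
    fun x => Finset.univ.filter fun u => A' u = x with hfibA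
  set fibB : (N → ZMod 2) → Finset (Fin M → ZMod 2) :=
    fun y => Finset.univ.filter fun u => B' u = y with hfibB
  have htransAB : ∀ (u u' : Fin M → ZMod 2) (y : N → ZMod 2),
      (fibAB (A' u) y).card = (fibAB (A' u') y).card := by
    intro u u' y
    obtain ⟨u₀, hA0, hB0⟩ := hshift (u + u')
    have hmap : ∀ w, A' (w + u₀) = A' w + A' u + A' u' := by
      intro w; rw [hA0 w, hApadd u u', add_assoc]
    have hinv : ∀ w : Fin M → ZMod 2, w + u₀ + u₀ = w := by
      intro w; rw [add_assoc, haddself u₀, add_zero]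
    refine Finset.card_nbij' (fun w => w + u₀) (fun w => w + u₀) ?_ ?_ ?_ ?_
    · intro w hw
      simp only [hfibAB, Finset.mem_coe, Finset.mem_filter, Finset.mem_univ, true_and] at hw ⊢
      obtain ⟨hw1, hw2⟩ := hw
      refine ⟨?_, by rw [hB0 w]; exact hw2⟩
      rw [hmap w, hw1, hNaddself (A' u), zero_add]
    · intro w hw
      simp only [hfibAB, Finset.mem_coe, Finset.mem_filter, Finset.mem_univ, true_and] at hw ⊢
      obtain ⟨hw1, hw2⟩ := hw
      refine ⟨?_, by rw [hB0 w]; exact hw2⟩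
      rw [hmap w, hw1, add_comm (A' u') (A' u), add_assoc, hNaddself (A' u'), add_zero]
    · intro w _; exact hinv w
    · intro w _; exact hinv w
  have htransA : ∀ u u' : Fin M → ZMod 2, (fibA (A' u)).card = (fibA (A' u')).card := by
    intro u u'
    obtain ⟨u₀, hA0, hB0⟩ := hshift (u + u')
    have hmap : ∀ w, A' (w + u₀) = A' w + A' u + A' u' := by
      intro w; rw [hA0 w, hApadd u u', add_assoc]
    have hinv : ∀ w : Fin M → ZMod 2, w + u₀ + u₀ = w := by
      intro w; rw [add_assoc, haddself u₀, add_zero]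
    refine Finset.card_nbij' (fun w => w + u₀) (fun w => w + u₀) ?_ ?_ ?_ ?_
    · intro w hw
      simp only [hfibA, Finset.mem_coe, Finset.mem_filter, Finset.mem_univ, true_and] at hw ⊢
      rw [hmap w, hw, hNaddself (A' u), zero_add]
    · intro w hw
      simp only [hfibA, Finset.mem_coe, Finset.mem_filter, Finset.mem_univ, true_and] at hw ⊢
      rw [hmap w, hw, add_comm (A' u') (A' u), add_assoc, hNaddself (A' u'), add_zero]
    · intro w _; exact hinv w
    · intro w _; exact hinv w
  -- the key counting identity
  have key : ∀ x y, (fibAB x y).card * 2 ^ M = (fibA x).card * (fibB y).card := by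
    intro x y
    by_cases hx : ∃ u, A' u = x
    · obtain ⟨u, hu⟩ := hx
      set R : Finset (N → ZMod 2) := Finset.univ.image A' with hR
      have hcardV : (Finset.univ : Finset (Fin M → ZMod 2)).card = 2 ^ M := by
        simp [Finset.card_univ]
      have h1 : 2 ^ M = R.card * (fibA x).card := by
        rw [← hcardV]
        rw [Finset.card_eq_sum_card_fiberwise
          (f := A') (t := R) (fun v _ => Finset.mem_image_of_mem _ (Finset.mem_univ v))]
        rw [Finset.sum_congr rfl fun z hz => ?_]
        · rw [Finset.sum_const, smul_eq_mul]
        · obtain ⟨u', _, hu'⟩ := Finset.mem_image.mp hz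
          show (Finset.univ.filter fun v => A' v = z).card = (fibA x).card
          rw [← hu', ← hu]
          exact htransA u' u
      have h2 : (fibB y).card = R.card * (fibAB x y).card := by
        rw [Finset.card_eq_sum_card_fiberwise
          (f := A') (t := R) (fun v _ => Finset.mem_image_of_mem _ (Finset.mem_univ v))]
        rw [Finset.sum_congr rfl fun z hz => ?_]
        · rw [Finset.sum_const, smul_eq_mul]
        · obtain ⟨u', _, hu'⟩ := Finset.mem_image.mp hz
          have hfil : (fibB y).filter (fun v => A' v = z) = fibAB z y := by
            ext v
            simp only [hfibB, hfibAB, Finset.mem_filter, Finset.mem_univ, true_and]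
            tauto
          rw [hfil, ← hu', ← hu]
          exact htransAB u' u y
      rw [h1, h2]
      ring
    · push_neg at hx
      have e1 : fibA x = ∅ := by
        rw [Finset.eq_empty_iff_forall_notMem]
        intro v hv
        simp only [hfibA, Finset.mem_filter] at hv
        exact hx v hv.2
      have e2 : fibAB x y = ∅ := by
        rw [Finset.eq_empty_iff_forall_notMem]
        intro v hv
        simp only [hfibAB, Finset.mem_filter] at hv
        exact hx v hv.2.1
      rw [e1, e2]
      simp
  -- probability side
  set ev : (Fin M → ZMod 2) → Set Ω := fun u => ⋂ i : Fin M, η (i : ℕ) ⁻¹' {u i} with hev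
  have hevmem : ∀ u ω, ω ∈ ev u ↔ W ω = u := by
    intro u ω
    simp only [hev, Set.mem_iInter, Set.mem_preimage, Set.mem_singleton_iff]
    exact ⟨fun h => funext h, fun h i => congrFun h i⟩
  have hevmeas : ∀ u, MeasurableSet (ev u) :=
    fun u => MeasurableSet.iInter fun i => (hηmeas (i : ℕ)) (measurableSet_singleton (u i))
  have hevP : ∀ u, P (ev u) = (1 / 2 : ENNReal) ^ M := by
    intro u
    have h1 : ev u = ⋂ m ∈ Finset.range M, η m ⁻¹' {pad u m} := by
      ext ω
      simp only [hev, Set.mem_iInter, Set.mem_preimage, Set.mem_singleton_iff,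
        Finset.mem_range]
      constructor
      · intro h m hm
        have h2 := h ⟨m, hm⟩
        simp only [hpad, hm, dif_pos]
        exact h2
      · intro h i
        have h2 := h (i : ℕ) i.isLt
        simp only [hpad, i.isLt, dif_pos] at h2
        exact h2
    rw [h1, hηindep.measure_inter_preimage_eq_mul (Finset.range M)
      (sets := fun m => {pad u m}) (fun m _ => measurableSet_singleton _)]
    rw [Finset.prod_congr rfl (fun m _ => ?_), Finset.prod_const, Finset.card_range]
    exact hηunif m (pad u m)
  have hsplitP : ∀ s t : Set (N → ZMod 2),
      P ((fun ω => A' (W ω)) ⁻¹' s ∩ (fun ω => B' (W ω)) ⁻¹' t)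
        = ((Finset.univ.filter fun u => A' u ∈ s ∧ B' u ∈ t).card : ENNReal)
          * (1 / 2 : ENNReal) ^ M := by
    intro s t
    have hset : (fun ω => A' (W ω)) ⁻¹' s ∩ (fun ω => B' (W ω)) ⁻¹' t
        = ⋃ u ∈ (Finset.univ.filter fun u => A' u ∈ s ∧ B' u ∈ t), ev u := by
      ext ω
      simp only [Set.mem_inter_iff, Set.mem_preimage, Set.mem_iUnion]
      constructor
      · rintro ⟨h1, h2⟩
        exact ⟨W ω, by simp [Finset.mem_filter, h1, h2], (hevmem _ ω).mpr rfl⟩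
      · rintro ⟨u, hu, hω⟩
        have hWu := (hevmem u ω).mp hω
        simp only [Finset.mem_filter] at hu
        rw [hWu]
        exact ⟨hu.2.1, hu.2.2⟩
    rw [hset, measure_biUnion_finset ?_ (fun u _ => hevmeas u)]
    · rw [Finset.sum_congr rfl (fun u _ => hevP u), Finset.sum_const, nsmul_eq_mul]
    · intro u hu u' hu' huu'
      refine Set.disjoint_left.mpr fun {ω} h1 h2 => huu' ?_
      rw [← (hevmem u ω).mp h1, ← (hevmem u' ω).mp h2]
  have hcount : ∀ s t : Set (N → ZMod 2),
      (Finset.univ.filter fun u => A' u ∈ s ∧ B' u ∈ t).card * 2 ^ M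
        = (Finset.univ.filter fun u => A' u ∈ s).card
          * (Finset.univ.filter fun u => B' u ∈ t).card := by
    intro s t
    set sF := Finset.univ.filter (fun x : N → ZMod 2 => x ∈ s) with hsF
    set tF := Finset.univ.filter (fun y : N → ZMod 2 => y ∈ t) with htF
    have hUst : (Finset.univ.filter fun u => A' u ∈ s ∧ B' u ∈ t).card
        = ∑ p ∈ sF ×ˢ tF, (fibAB p.1 p.2).card := by
      rw [Finset.card_eq_sum_card_fiberwise
        (f := fun u => (A' u, B' u)) (t := sF ×ˢ tF) ?_]
      · refine Finset.sum_congr rfl fun p hp => ?_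
        rw [Finset.mem_product] at hp
        congr 1
        ext u
        simp only [hfibAB, hsF, htF, Finset.mem_filter, Finset.mem_univ, true_and,
          Prod.ext_iff] at hp ⊢
        constructor
        · tauto
        · rintro ⟨h1, h2⟩
          exact ⟨⟨h1 ▸ hp.1, h2 ▸ hp.2⟩, h1, h2⟩
      · intro u hu
        simp only [Finset.mem_coe, Finset.mem_filter, Finset.mem_univ, true_and] at hu
        rw [Finset.mem_coe, Finset.mem_product]
        simp only [hsF, htF, Finset.mem_filter, Finset.mem_univ, true_and]
        exact hu
    have hUs : (Finset.univ.filter fun u => A' u ∈ s).card = ∑ x ∈ sF, (fibA x).card := by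
      rw [Finset.card_eq_sum_card_fiberwise (f := A') (t := sF) ?_]
      · refine Finset.sum_congr rfl fun x hx => ?_
        simp only [hsF, Finset.mem_filter, Finset.mem_univ, true_and] at hx
        congr 1
        ext u
        simp only [hfibA, Finset.mem_filter, Finset.mem_univ, true_and]
        constructor
        · rintro ⟨_, h⟩; exact h
        · intro h; rw [h]; exact ⟨hx, rfl⟩
      · intro u hu
        simp only [Finset.mem_coe, Finset.mem_filter, Finset.mem_univ, true_and] at hu
        simp only [hsF, Finset.mem_coe, Finset.mem_filter, Finset.mem_univ, true_and]
        exact hu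
    have hUt : (Finset.univ.filter fun u => B' u ∈ t).card = ∑ y ∈ tF, (fibB y).card := by
      rw [Finset.card_eq_sum_card_fiberwise (f := B') (t := tF) ?_]
      · refine Finset.sum_congr rfl fun y hy => ?_
        simp only [htF, Finset.mem_filter, Finset.mem_univ, true_and] at hy
        congr 1
        ext u
        simp only [hfibB, Finset.mem_filter, Finset.mem_univ, true_and]
        constructor
        · rintro ⟨_, h⟩; exact h
        · intro h; rw [h]; exact ⟨hy, rfl⟩
      · intro u hu
        simp only [Finset.mem_coe, Finset.mem_filter, Finset.mem_univ, true_and] at hu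
        simp only [htF, Finset.mem_coe, Finset.mem_filter, Finset.mem_univ, true_and]
        exact hu
    rw [hUst, hUs, hUt, Finset.sum_mul_sum sF tF, Finset.sum_product, Finset.sum_mul]
    refine Finset.sum_congr rfl fun x hx => ?_
    rw [Finset.sum_mul]
    refine Finset.sum_congr rfl fun y hy => ?_
    exact key x y
  -- finish
  rw [indepFun_iff_measure_inter_preimage_eq_mul]
  intro s t _ _
  have hXeq : (fun ω => A fun m => η m ω) = fun ω => A' (W ω) := funext hWA
  have hYeq : (fun ω => B fun m => η m ω) = fun ω => B' (W ω) := funext hWB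
  rw [hXeq, hYeq]
  have e1 := hsplitP s t
  have e2 := hsplitP s Set.univ
  have e3 := hsplitP Set.univ t
  simp only [Set.preimage_univ, Set.inter_univ, Set.mem_univ, and_true] at e2
  simp only [Set.preimage_univ, Set.univ_inter, Set.mem_univ, true_and] at e3
  rw [e1, e2, e3]
  have hc := hcount s t
  have h2M : (2 : ENNReal) ^ M * (1 / 2 : ENNReal) ^ M = 1 := by
    rw [← mul_pow, one_div, ENNReal.mul_inv_cancel (by norm_num) (by norm_num), one_pow]
  calc ((Finset.univ.filter fun u => A' u ∈ s ∧ B' u ∈ t).card : ENNReal) * (1 / 2) ^ M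
      = (((Finset.univ.filter fun u => A' u ∈ s ∧ B' u ∈ t).card * 2 ^ M : ℕ) : ENNReal)
        * ((1 / 2 : ENNReal) ^ M * (1 / 2 : ENNReal) ^ M) := by
        push_cast
        rw [mul_assoc, ← mul_assoc ((2:ENNReal) ^ M), h2M, one_mul]
    _ = (((Finset.univ.filter fun u => A' u ∈ s).card
          * (Finset.univ.filter fun u => B' u ∈ t).card : ℕ) : ENNReal)
        * ((1 / 2 : ENNReal) ^ M * (1 / 2 : ENNReal) ^ M) := by rw [hc]
    _ = ((Finset.univ.filter fun u => A' u ∈ s).card : ENNReal) * (1 / 2) ^ M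
        * (((Finset.univ.filter fun u => B' u ∈ t).card : ENNReal) * (1 / 2) ^ M) := by
        push_cast
        ring


lemma exists_high {a b : ℕ} (hab : a ≠ b) :
    (∃ h, memD a h ∧ ¬ memD b h) ∨ (∃ h, memD b h ∧ ¬ memD a h) := by
  have hex : ∃ j, tdigit j a ≠ tdigit j b := by
    by_contra hcon
    push_neg at hcon
    exact hab (eq_of_tdigit_eq hcon)
  obtain ⟨j₀, hj⟩ := hex
  by_cases hb2 : tdigit j₀ b = 2
  · right
    exact exists_high_aux (Ne.symm hj) (fun h2 => hj (h2.trans hb2.symm))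
  · left
    exact exists_high_aux hj hb2

lemma div_high {K t : ℕ} (A : ℕ) (ht : t < 3 ^ K) : (A * 3 ^ K + t) / 3 ^ K = A := by
  rw [Nat.add_comm, Nat.add_mul_div_right _ _ (Nat.pow_pos (n := K) (by norm_num)),
    Nat.div_eq_of_lt ht, Nat.zero_add]

/-- the key per-coefficient parity identity -/
lemma coeff_identity (K A' t : ℕ) (ht : t < 3 ^ K) (m : ℕ) :
    (if memD (A' * 3 ^ K + t) m then (1 : ZMod 2) else 0)
      = ∑ W ∈ (Finset.univ.filter fun j : Fin K => tdigit (j : ℕ) t = 1).powerset,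
          (if memD (A' * 3 ^ K
              + tau K ((Finset.univ.filter fun j : Fin K => tdigit (j : ℕ) t = 2) ∪ W)) m
            then (1 : ZMod 2) else 0) := by
  set ones : Finset (Fin K) := Finset.univ.filter fun j : Fin K => tdigit (j : ℕ) t = 1
    with hones
  set twos : Finset (Fin K) := Finset.univ.filter fun j : Fin K => tdigit (j : ℕ) t = 2
    with htwos
  by_cases hHP : memD A' (m / 3 ^ K)
  · -- reduce to low conditions
    have hiff : ∀ t' : ℕ, t' < 3 ^ K →
        (memD (A' * 3 ^ K + t') m ↔ ∀ j : Fin K, condD (tdigit (j : ℕ) t') (tdigit (j : ℕ) m)) := by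
      intro t' ht'
      rw [memD_char A' ht' m]
      constructor
      · rintro ⟨h1, _⟩ j
        exact h1 (j : ℕ) j.isLt
      · intro h1
        exact ⟨fun j hj => h1 ⟨j, hj⟩, hHP⟩
    have htauiff : ∀ S : Finset (Fin K),
        ((∀ j : Fin K, condD (tdigit (j : ℕ) (tau K S)) (tdigit (j : ℕ) m)) ↔
          ∀ j : Fin K, if j ∈ S then tdigit (j : ℕ) m ≤ 1 else tdigit (j : ℕ) m = 0) := by
      intro S
      refine forall_congr' fun j => ?_
      rw [tdigit_tau S j]
      by_cases hj : j ∈ S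
      · rw [if_pos hj, if_pos hj]
        unfold condD
        norm_num
      · rw [if_neg hj, if_neg hj]
        unfold condD
        norm_num
    rw [if_congr (hiff t ht) rfl rfl]
    have hsum : ∀ W ∈ ones.powerset,
        (if memD (A' * 3 ^ K + tau K (twos ∪ W)) m then (1 : ZMod 2) else 0)
          = (if (∀ j : Fin K, if j ∈ twos ∪ W then tdigit (j : ℕ) m ≤ 1
              else tdigit (j : ℕ) m = 0) then (1 : ZMod 2) else 0) := by
      intro W _
      rw [if_congr ((hiff _ (tau_lt K _)).trans (htauiff _)) rfl rfl]
    rw [Finset.sum_congr rfl hsum]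
    by_cases hz : ∃ j₀ : Fin K, tdigit (j₀ : ℕ) t = 1 ∧ tdigit (j₀ : ℕ) m = 0
    · -- LHS is 0 and RHS cancels in pairs
      obtain ⟨j₀, hj1, hj2⟩ := hz
      have hLHS : ¬ (∀ j : Fin K, condD (tdigit (j : ℕ) t) (tdigit (j : ℕ) m)) := by
        intro h
        have := h j₀
        rw [hj1, hj2] at this
        unfold condD at this
        norm_num at this
      rw [if_neg hLHS]
      refine (Finset.sum_involution
        (fun W _ => if j₀ ∈ W then W.erase j₀ else insert j₀ W) ?_ ?_ ?_ ?_).symm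
      · -- f W + f (g W) = 0
        intro W hW
        have hiff2 : (∀ j : Fin K, if j ∈ twos ∪ W then tdigit (j : ℕ) m ≤ 1
              else tdigit (j : ℕ) m = 0) ↔
            (∀ j : Fin K, if j ∈ twos ∪ (if j₀ ∈ W then W.erase j₀ else insert j₀ W)
              then tdigit (j : ℕ) m ≤ 1 else tdigit (j : ℕ) m = 0) := by
          refine forall_congr' fun j => ?_
          rcases eq_or_ne j j₀ with rfl | hne
          · have hmz : tdigit (j : ℕ) m = 0 := hj2
            have htriv : ∀ s : Finset (Fin K),
                (if j ∈ s then tdigit (j : ℕ) m ≤ 1 else tdigit (j : ℕ) m = 0) := by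
              intro s
              split <;> omega
            constructor <;> intro _ <;> exact htriv _
          · have hmemiff : (j ∈ twos ∪ W) ↔
                (j ∈ twos ∪ (if j₀ ∈ W then W.erase j₀ else insert j₀ W)) := by
              simp only [Finset.mem_union]
              split
              · rw [Finset.mem_erase]
                tauto
              · rw [Finset.mem_insert]
                constructor
                · tauto
                · rintro (h | (rfl | h)) <;> tauto
            exact iff_of_eq (if_congr hmemiff rfl rfl)
        simp only [if_congr hiff2 rfl rfl]
        exact zmod2_add_self _
      · -- g W ≠ W when f W ≠ 0
        intro W hW _
        split
        · next h => exact fun he => (Finset.notMem_erase j₀ W) (he.symm ▸ h)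
        · next h => exact fun he => h (he ▸ Finset.mem_insert_self j₀ W)
      · -- g W ∈ powerset
        intro W hW
        rw [Finset.mem_powerset] at hW ⊢
        split
        · exact (Finset.erase_subset j₀ W).trans hW
        · refine Finset.insert_subset ?_ hW
          simp only [hones, Finset.mem_filter, Finset.mem_univ, true_and]
          exact hj1
      · -- involution
        intro W hW
        by_cases h : j₀ ∈ W
        · rw [if_pos h, if_neg (Finset.notMem_erase j₀ W), Finset.insert_erase h]
        · rw [if_neg h, if_pos (Finset.mem_insert_self j₀ W), Finset.erase_insert h]
    · -- single term survives
      push_neg at hz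
      rw [Finset.sum_eq_single_of_mem ones (Finset.mem_powerset_self ones) ?_]
      · refine if_congr (forall_congr' fun j => ?_) rfl rfl
        have h3 := tdigit_lt (j : ℕ) t
        by_cases h1 : tdigit (j : ℕ) t = 1
        · have hm0 := hz j h1
          have hu : j ∈ twos ∪ ones := by
            simp only [hones, htwos, Finset.mem_union, Finset.mem_filter, Finset.mem_univ,
              true_and]
            exact Or.inr h1
          rw [if_pos hu, h1]
          unfold condD
          norm_num
          omega
        · by_cases h2 : tdigit (j : ℕ) t = 2
          · have hu : j ∈ twos ∪ ones := by
              rw [Finset.mem_union, htwos, Finset.mem_filter]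
              exact Or.inl ⟨Finset.mem_univ _, h2⟩
            rw [if_pos hu, h2]
            unfold condD
            norm_num
          · have h0 : tdigit (j : ℕ) t = 0 := by omega
            have hu : ¬ j ∈ twos ∪ ones := by
              simp only [hones, htwos, Finset.mem_union, Finset.mem_filter, Finset.mem_univ,
                true_and]
              rintro (h | h) <;> omega
            rw [if_neg hu, h0]
            unfold condD
            norm_num
      · intro W hW hWne
        rw [Finset.mem_powerset] at hW
        obtain ⟨j₀, hj₀o, hj₀W⟩ := Finset.exists_of_ssubset (lt_of_le_of_ne hW hWne)
        have hj₀1 : tdigit (j₀ : ℕ) t = 1 := by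
          simp only [hones, Finset.mem_filter, Finset.mem_univ, true_and] at hj₀o
          exact hj₀o
        refine if_neg fun h => ?_
        have := h j₀
        have hu : ¬ j₀ ∈ twos ∪ W := by
          simp only [htwos, Finset.mem_union, Finset.mem_filter, Finset.mem_univ, true_and]
          rintro (h2 | hw)
          · omega
          · exact hj₀W hw
        rw [if_neg hu] at this
        exact hz j₀ hj₀1 this
  · -- high part fails: everything is 0
    have hno : ∀ t' : ℕ, t' < 3 ^ K → ¬ memD (A' * 3 ^ K + t') m := by
      intro t' ht' hmem
      exact hHP ((memD_char A' ht' m).mp hmem).2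
    rw [if_neg (hno t ht), Finset.sum_eq_zero]
    intro W _
    rw [if_neg (hno _ (tau_lt K _))]

lemma filter_superset_card {α : Type*} [DecidableEq α] (S S' : Finset α) (hS' : S' ⊆ S) :
    (S.powerset.filter fun U => S' ⊆ U).card = 2 ^ (S \ S').card := by
  rw [← Finset.card_powerset]
  apply Finset.card_nbij' (fun U => U \ S') (fun W => W ∪ S')
  · intro U hU
    rw [Finset.mem_coe, Finset.mem_filter, Finset.mem_powerset] at hU
    rw [Finset.mem_coe, Finset.mem_powerset]
    exact Finset.sdiff_subset_sdiff hU.1 (Finset.Subset.refl _)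
  · intro W hW
    rw [Finset.mem_coe, Finset.mem_powerset] at hW
    rw [Finset.mem_coe, Finset.mem_filter, Finset.mem_powerset]
    refine ⟨Finset.union_subset (hW.trans (Finset.sdiff_subset)) hS', Finset.subset_union_right⟩
  · intro U hU
    rw [Finset.mem_coe, Finset.mem_filter, Finset.mem_powerset] at hU
    exact Finset.sdiff_union_of_subset hU.2
  · intro W hW
    rw [Finset.mem_coe, Finset.mem_powerset] at hW
    dsimp only
    rw [Finset.union_sdiff_right]
    exact Finset.sdiff_eq_self_of_disjoint (Finset.disjoint_left.mpr fun x hx =>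
      (Finset.mem_sdiff.mp (hW hx)).2)

lemma powerset_double_sum {α : Type*} [DecidableEq α] (S : Finset α) (c : Finset α → ZMod 2) :
    ∑ U ∈ S.powerset, ∑ S' ∈ U.powerset, c S' = c S := by
  have h1 : ∀ U ∈ S.powerset, ∑ S' ∈ U.powerset, c S'
      = ∑ S' ∈ S.powerset, if S' ⊆ U then c S' else 0 := by
    intro U hU
    rw [Finset.mem_powerset] at hU
    rw [Finset.sum_ite, Finset.sum_const, smul_zero, add_zero]
    congr 1
    ext S'
    rw [Finset.mem_filter, Finset.mem_powerset, Finset.mem_powerset]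
    exact ⟨fun h => ⟨h.trans hU, h⟩, fun h => h.2⟩
  rw [Finset.sum_congr rfl h1, Finset.sum_comm]
  have h2 : ∀ S' ∈ S.powerset, (∑ U ∈ S.powerset, if S' ⊆ U then c S' else 0)
      = (2 ^ (S \ S').card : ℕ) • c S' := by
    intro S' hS'
    rw [Finset.sum_ite, Finset.sum_const, Finset.sum_const, smul_zero, add_zero,
      filter_superset_card S S' (Finset.mem_powerset.mp hS')]
  rw [Finset.sum_congr rfl h2]
  rw [Finset.sum_eq_single S]
  · rw [Finset.sdiff_self, Finset.card_empty, pow_zero, one_smul]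
  · intro S' hS' hne
    have hd : (S \ S').card ≠ 0 := by
      intro h0
      rw [Finset.card_eq_zero, Finset.sdiff_eq_empty_iff_subset] at h0
      exact hne (Finset.Subset.antisymm (Finset.mem_powerset.mp hS') h0)
    rw [nsmul_eq_mul]
    have : ((2 ^ (S \ S').card : ℕ) : ZMod 2) = 0 := by
      rw [Nat.cast_pow]
      have h2z : ((2 : ℕ) : ZMod 2) = 0 := by decide
      rw [h2z, zero_pow hd]
    rw [this, zero_mul]
  · intro h
    exact absurd (Finset.mem_powerset_self S) h

lemma htrans_core (K aa bb h₀ M : ℕ) (hha : memD aa h₀) (hhb : ¬ memD bb h₀)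
    (hM : (h₀ + 1) * 3 ^ K ≤ M) (v : ℕ → ZMod 2) :
    ∃ v₀ : ℕ → ZMod 2,
      (fun S : Finset (Fin K) =>
          ∑ m ∈ Finset.range M, if memD (aa * 3 ^ K + tau K S) m then v₀ m else 0)
        = (fun S : Finset (Fin K) =>
          ∑ m ∈ Finset.range M, if memD (aa * 3 ^ K + tau K S) m then v m else 0)
      ∧ (fun S : Finset (Fin K) =>
          ∑ m ∈ Finset.range M, if memD (bb * 3 ^ K + tau K S) m then v₀ m else 0) = 0 := by
  classical
  set c : Finset (Fin K) → ZMod 2 := fun S =>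
    ∑ m ∈ Finset.range M, if memD (aa * 3 ^ K + tau K S) m then v m else 0 with hc
  set g : Finset (Fin K) → ZMod 2 := fun U => ∑ S' ∈ U.powerset, c S' with hg
  set E : Finset (Fin K) → ℕ := fun U => h₀ * 3 ^ K + lowOf K U with hE
  set v₀ : ℕ → ZMod 2 := fun m =>
    if m / 3 ^ K = h₀ ∧ ∀ j : Fin K, tdigit (j : ℕ) m ≤ 1
    then g (Finset.univ.filter fun j : Fin K => tdigit (j : ℕ) m = 1) else 0 with hv₀
  -- digits of E U
  have hElow : ∀ (U : Finset (Fin K)) (j : Fin K),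
      tdigit (j : ℕ) (E U) = if j ∈ U then 1 else 0 := by
    intro U j
    rw [hE]
    dsimp only
    rw [tdigit_low h₀ (lowOf_lt K U) j.isLt]
    exact tdigit_lowOf U j
  have hEdiv : ∀ U : Finset (Fin K), E U / 3 ^ K = h₀ := fun U => div_high h₀ (lowOf_lt K U)
  have hEcond : ∀ U : Finset (Fin K), v₀ (E U) = g U := by
    intro U
    rw [hv₀]
    dsimp only
    rw [if_pos]
    · congr 1
      ext j
      simp only [Finset.mem_filter, Finset.mem_univ, true_and, hElow U j]
      split <;> simp_all
    · refine ⟨hEdiv U, fun j => ?_⟩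
      rw [hElow U j]
      split <;> norm_num
  have hEmem : ∀ (U S : Finset (Fin K)),
      memD (aa * 3 ^ K + tau K S) (E U) ↔ U ⊆ S := by
    intro U S
    rw [memD_char aa (tau_lt K S) (E U)]
    constructor
    · rintro ⟨h1, _⟩ j hj
      have h2 := h1 (j : ℕ) j.isLt
      have h4 : tdigit (j : ℕ) (E U) = 1 := by rw [hElow U j, if_pos hj]
      by_contra hjS
      rw [tdigit_tau S j] at h2
      unfold condD at h2
      rw [if_neg hjS] at h2
      norm_num at h2
      omega
    · intro hUS
      refine ⟨fun j hj => ?_, by rwa [hEdiv U]⟩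
      have h2 : tdigit j (tau K S) = if (⟨j, hj⟩ : Fin K) ∈ S then 2 else 0 :=
        tdigit_tau S ⟨j, hj⟩
      have h4 : tdigit j (E U) = if (⟨j, hj⟩ : Fin K) ∈ U then 1 else 0 := hElow U ⟨j, hj⟩
      rw [h2]
      unfold condD
      by_cases hjS : (⟨j, hj⟩ : Fin K) ∈ S
      · rw [if_pos hjS]
        norm_num
        rw [h4]
        split <;> norm_num
      · rw [if_neg hjS]
        norm_num
        rw [h4, if_neg fun hjU => hjS (hUS hjU)]
  have hElt : ∀ U : Finset (Fin K), E U < M := by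
    intro U
    calc E U < h₀ * 3 ^ K + 3 ^ K := Nat.add_lt_add_left (lowOf_lt K U) _
    _ = (h₀ + 1) * 3 ^ K := by ring
    _ ≤ M := hM
  have hEinj : ∀ U U' : Finset (Fin K), E U = E U' → U = U' := by
    intro U U' h
    ext j
    have := congrArg (tdigit (j : ℕ)) h
    rw [hElow U j, hElow U' j] at this
    constructor <;> intro hj
    · rw [if_pos hj] at this
      by_contra hj'
      rw [if_neg hj'] at this
      norm_num at this
    · rw [if_pos hj] at this
      by_contra hj'
      rw [if_neg hj'] at this
      norm_num at this
  have hsupp : ∀ m, m ∈ Finset.range M →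
      m ∉ Finset.univ.image E → v₀ m = 0 := by
    intro m _ hm
    rw [hv₀]
    dsimp only
    rw [if_neg]
    intro ⟨h1, h2⟩
    apply hm
    rw [Finset.mem_image]
    refine ⟨Finset.univ.filter fun j : Fin K => tdigit (j : ℕ) m = 1, Finset.mem_univ _, ?_⟩
    apply eq_of_tdigit_eq
    intro j
    rcases Nat.lt_or_ge j K with hj | hj
    · rw [show (j : ℕ) = ((⟨j, hj⟩ : Fin K) : ℕ) from rfl,
        hElow _ ⟨j, hj⟩]
      simp only [Finset.mem_filter, Finset.mem_univ, true_and]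
      have := h2 ⟨j, hj⟩
      have hcoe : tdigit ((⟨j, hj⟩ : Fin K) : ℕ) m = tdigit j m := rfl
      split
      · next hh => exact hh.symm
      · next hh => omega
    · have hj2 : j = (j - K) + K := by omega
      rw [hj2, tdigit_high h₀ (lowOf_lt K _) (j - K), tdigit_add_high (j - K) K m, h1]
  refine ⟨v₀, funext fun S => ?_, funext fun S => ?_⟩
  · -- A v₀ = A v
    have step1 : (∑ m ∈ Finset.range M, if memD (aa * 3 ^ K + tau K S) m then v₀ m else 0)
        = ∑ m ∈ Finset.univ.image E, if memD (aa * 3 ^ K + tau K S) m then v₀ m else 0 := by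
      refine (Finset.sum_subset ?_ ?_).symm
      · intro m hm
        rw [Finset.mem_image] at hm
        obtain ⟨U, _, rfl⟩ := hm
        exact Finset.mem_range.mpr (hElt U)
      · intro m hm hm2
        rw [hsupp m hm hm2]
        split <;> rfl
    rw [step1, Finset.sum_image fun U _ U' _ h => hEinj U U' h]
    have step2 : (∑ U : Finset (Fin K), if memD (aa * 3 ^ K + tau K S) (E U) then v₀ (E U) else 0)
        = ∑ U ∈ S.powerset, g U := by
      rw [← Finset.sum_filter]
      refine Finset.sum_congr ?_ fun U hU => hEcond U
      ext U
      rw [Finset.mem_filter, Finset.mem_powerset, hEmem U S]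
      exact ⟨fun h => h.2, fun h => ⟨Finset.mem_univ _, h⟩⟩
    rw [step2, hg]
    exact powerset_double_sum S c
  · -- B v₀ = 0
    show (∑ m ∈ Finset.range M, if memD (bb * 3 ^ K + tau K S) m then v₀ m else 0) = 0
    refine Finset.sum_eq_zero fun m _ => ?_
    split
    · next hmem =>
      rw [hv₀]
      dsimp only
      rw [if_neg]
      intro ⟨h1, _⟩
      have := ((memD_char bb (tau_lt K S) m).mp hmem).2
      rw [h1] at this
      exact hhb this
    · rfl

lemma blocks_indep_dir
    {Ω : Type*} [MeasurableSpace Ω] (P : Measure Ω) [IsProbabilityMeasure P]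
    (η : ℕ → Ω → ZMod 2) (hηmeas : ∀ m, Measurable (η m))
    (hηindep : iIndepFun η P)
    (hηunif : ∀ (m : ℕ) (c : ZMod 2), P {ω | η m ω = c} = 1 / 2)
    (ξ : ℕ → Ω → ZMod 2)
    (hξ : ∀ (n : ℕ) (ω : Ω),
      ξ n ω = ∑ m ∈ Finset.range (n + 1), if memD n m then η m ω else 0)
    (k a b h₀ : ℕ) (hha : memD a h₀) (hhb : ¬ memD b h₀) :
    IndepFun (fun ω (t : Fin (3 ^ k)) => ξ (a * 3 ^ k + (t : ℕ)) ω)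
      (fun ω (t : Fin (3 ^ k)) => ξ (b * 3 ^ k + (t : ℕ)) ω) P := by
  classical
  set M := (max a b + 1) * 3 ^ k with hM
  have hξ' : ∀ (A' : ℕ), A' ≤ max a b → ∀ t, t < 3 ^ k → ∀ ω,
      ξ (A' * 3 ^ k + t) ω
        = ∑ m ∈ Finset.range M, if memD (A' * 3 ^ k + t) m then η m ω else 0 := by
    intro A' hA' t ht ω
    rw [hξ]
    apply Finset.sum_subset
    · intro m hm
      rw [Finset.mem_range] at hm ⊢
      have e1 : A' * 3 ^ k + t + 1 ≤ (A' + 1) * 3 ^ k := by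
        have h2 : t + 1 ≤ 3 ^ k := ht
        rw [add_mul, one_mul]
        omega
      have e2 : (A' + 1) * 3 ^ k ≤ (max a b + 1) * 3 ^ k :=
        Nat.mul_le_mul_right _ (by omega)
      omega
    · intro m hm hm2
      rw [if_neg]
      intro hmem
      exact hm2 (Finset.mem_range.mpr (by have := memD_le hmem; omega))
  set Acore : (ℕ → ZMod 2) → Finset (Fin k) → ZMod 2 := fun v S =>
    ∑ m ∈ Finset.range M, if memD (a * 3 ^ k + tau k S) m then v m else 0 with hAcore
  set Bcore : (ℕ → ZMod 2) → Finset (Fin k) → ZMod 2 := fun v S =>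
    ∑ m ∈ Finset.range M, if memD (b * 3 ^ k + tau k S) m then v m else 0 with hBcore
  have locA : ∀ v w, (∀ m, m < M → v m = w m) → Acore v = Acore w := by
    intro v w h
    funext S
    exact Finset.sum_congr rfl fun m hm => by
      rw [h m (Finset.mem_range.mp hm)]
  have locB : ∀ v w, (∀ m, m < M → v m = w m) → Bcore v = Bcore w := by
    intro v w h
    funext S
    exact Finset.sum_congr rfl fun m hm => by
      rw [h m (Finset.mem_range.mp hm)]
  have addA : ∀ v w, Acore (v + w) = Acore v + Acore w := by
    intro v w
    funext S
    show (∑ m ∈ Finset.range M, if memD (a * 3 ^ k + tau k S) m then (v + w) m else 0)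
      = Acore v S + Acore w S
    rw [hAcore]
    dsimp only
    rw [← Finset.sum_add_distrib]
    refine Finset.sum_congr rfl fun m _ => ?_
    split
    · rfl
    · rw [add_zero]
  have addB : ∀ v w, Bcore (v + w) = Bcore v + Bcore w := by
    intro v w
    funext S
    show (∑ m ∈ Finset.range M, if memD (b * 3 ^ k + tau k S) m then (v + w) m else 0)
      = Bcore v S + Bcore w S
    rw [hBcore]
    dsimp only
    rw [← Finset.sum_add_distrib]
    refine Finset.sum_congr rfl fun m _ => ?_
    split
    · rfl
    · rw [add_zero]
  have hMle : (h₀ + 1) * 3 ^ k ≤ M := by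
    have h1 : h₀ ≤ a := memD_le hha
    exact Nat.mul_le_mul_right _ (by omega)
  have htransC : ∀ v, ∃ v₀, Acore v₀ = Acore v ∧ Bcore v₀ = 0 := by
    intro v
    obtain ⟨v₀, h1, h2⟩ := htrans_core k a b h₀ M hha hhb hMle v
    exact ⟨v₀, h1, h2⟩
  have hIndepCore := indep_of_shift P η hηmeas hηindep hηunif M Acore Bcore
    locA locB addA addB htransC
  have hAξ : ∀ ω, (Acore fun m => η m ω) = fun S => ξ (a * 3 ^ k + tau k S) ω := by
    intro ω
    funext S
    rw [hξ' a (le_max_left a b) (tau k S) (tau_lt k S) ω]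
  have hBξ : ∀ ω, (Bcore fun m => η m ω) = fun S => ξ (b * 3 ^ k + tau k S) ω := by
    intro ω
    funext S
    rw [hξ' b (le_max_right a b) (tau k S) (tau_lt k S) ω]
  have hblock : ∀ (A' : ℕ), A' ≤ max a b → ∀ (t : ℕ), t < 3 ^ k → ∀ ω,
      ξ (A' * 3 ^ k + t) ω
        = ∑ W ∈ (Finset.univ.filter fun j : Fin k => tdigit (j : ℕ) t = 1).powerset,
            ξ (A' * 3 ^ k
              + tau k ((Finset.univ.filter fun j : Fin k => tdigit (j : ℕ) t = 2) ∪ W)) ω := by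
    intro A' hA' t ht ω
    rw [hξ' A' hA' t ht ω]
    rw [Finset.sum_congr rfl (fun W _ => hξ' A' hA' _ (tau_lt k _) ω)]
    rw [Finset.sum_comm]
    refine Finset.sum_congr rfl fun m _ => ?_
    have hci := coeff_identity k A' t ht m
    calc (if memD (A' * 3 ^ k + t) m then η m ω else 0)
        = (if memD (A' * 3 ^ k + t) m then (1 : ZMod 2) else 0) * η m ω := by
          rw [ite_mul, one_mul, zero_mul]
      _ = (∑ W ∈ (Finset.univ.filter fun j : Fin k => tdigit (j : ℕ) t = 1).powerset,
            if memD (A' * 3 ^ k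
              + tau k ((Finset.univ.filter fun j : Fin k => tdigit (j : ℕ) t = 2) ∪ W)) m
            then (1 : ZMod 2) else 0) * η m ω := by rw [hci]
      _ = _ := by
          rw [Finset.sum_mul]
          refine Finset.sum_congr rfl fun W _ => ?_
          rw [ite_mul, one_mul, zero_mul]
  set F : (Finset (Fin k) → ZMod 2) → (Fin (3 ^ k) → ZMod 2) := fun c t =>
    ∑ W ∈ (Finset.univ.filter fun j : Fin k => tdigit (j : ℕ) (t : ℕ) = 1).powerset,
      c ((Finset.univ.filter fun j : Fin k => tdigit (j : ℕ) (t : ℕ) = 2) ∪ W) with hF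
  have hFmeas : Measurable F :=
    measurable_pi_lambda _ fun t => Finset.measurable_sum _ fun W _ => measurable_pi_apply _
  have hcompA : (fun ω (t : Fin (3 ^ k)) => ξ (a * 3 ^ k + (t : ℕ)) ω)
      = F ∘ (fun ω => Acore fun m => η m ω) := by
    funext ω
    show _ = F (Acore fun m => η m ω)
    rw [hAξ ω]
    funext t
    rw [hF]
    dsimp only
    exact hblock a (le_max_left a b) (t : ℕ) t.isLt ω
  have hcompB : (fun ω (t : Fin (3 ^ k)) => ξ (b * 3 ^ k + (t : ℕ)) ω)
      = F ∘ (fun ω => Bcore fun m => η m ω) := by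
    funext ω
    show _ = F (Bcore fun m => η m ω)
    rw [hBξ ω]
    funext t
    rw [hF]
    dsimp only
    exact hblock b (le_max_right a b) (t : ℕ) t.isLt ω
  rw [hcompA, hcompB]
  exact hIndepCore.comp hFmeas hFmeas

/-- **(Independence of distinct `k`-blocks in the block construction.)**
Let `(η_m)_{m∈ℕ}` be i.i.d. uniform `ZMod 2` random variables and let the
block-construction process be `ξ_n := Σ_{m ∈ D(n)} η_m` (where `D(n) ⊆ {0,…,n}` is the
set of indices described above, so that `ξ_{2·3^k+j} = ξ_j + ξ_{3^k+j}` for all `k ≥ 0`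
and `0 ≤ j < 3^k`).  Then for every `k ≥ 0` and all `a ≠ b`, the two `k`-blocks
`(ξ_n)_{a·3^k ≤ n < (a+1)·3^k}` and `(ξ_n)_{b·3^k ≤ n < (b+1)·3^k}` are independent
random vectors. -/
theorem block_construction_blocks_independent
    {Ω : Type*} [MeasurableSpace Ω] (P : Measure Ω) [IsProbabilityMeasure P]
    (η : ℕ → Ω → ZMod 2)
    (hηmeas : ∀ m, Measurable (η m))
    (hηindep : iIndepFun η P)
    (hηunif : ∀ (m : ℕ) (c : ZMod 2), P {ω | η m ω = c} = 1 / 2)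
    (ξ : ℕ → Ω → ZMod 2)
    (hξ : ∀ (n : ℕ) (ω : Ω),
      ξ n ω = ∑ m ∈ Finset.range (n + 1), if memD n m then η m ω else 0)
    (k : ℕ) (a b : ℕ) (hab : a ≠ b) :
    IndepFun (fun ω (t : Fin (3 ^ k)) => ξ (a * 3 ^ k + (t : ℕ)) ω)
      (fun ω (t : Fin (3 ^ k)) => ξ (b * 3 ^ k + (t : ℕ)) ω) P := by
  rcases exists_high hab with ⟨h₀, h1, h2⟩ | ⟨h₀, h1, h2⟩
  · exact blocks_indep_dir P η hηmeas hηindep hηunif ξ hξ k a b h₀ h1 h2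
  · exact (blocks_indep_dir P η hηmeas hηindep hηunif ξ hξ k b a h₀ h1 h2).symm
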